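/- Let ρ be a measure on (0,∞) with ∫ (1-e^{-r}) ρ(dr) < ∞ and F a probability measure on [0,∞) with finite second moment. Then ∫∫∫ (1 - exp(-r v₁ v₂)) ρ(dr) F(dv₁) F(dv₂) < ∞. -/
import Mathlib

open MeasureTheory Real

lemma real_key {r a : ℝ} (hr : 0 ≤ r) (ha : 0 ≤ a) :
    1 - Real.exp (-(r * a)) ≤ (1 + a) * (1 - Real.exp (-r)) := by
  have h1 : 0 ≤ 1 - Real.exp (-r) := by
    have : Real.exp (-r) ≤ 1 := Real.exp_le_one_iff.mpr (by linarith)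
    linarith
  rcases le_total a 1 with h | h
  · have h2 : Real.exp (-r) ≤ Real.exp (-(r * a)) :=
      Real.exp_le_exp.mpr (by nlinarith)
    nlinarith
  · have hb : (-1 : ℝ) ≤ Real.exp (-r) - 1 := by linarith [Real.exp_pos (-r)]
    have hB := one_add_mul_self_le_rpow_one_add hb h
    have hrp : (1 + (Real.exp (-r) - 1)) ^ a = Real.exp (-(r * a)) := by
      rw [show (1 + (Real.exp (-r) - 1)) = Real.exp (-r) by ring, ← Real.exp_mul]
      ring_nf
    rw [hrp] at hB
    nlinarith

theorem stmt_5 (ρ : Measure ℝ) (F : Measure ℝ) [IsProbabilityMeasure F]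
    (hρ_supp : ρ (Set.Iic 0) = 0)
    (hρ : ∫⁻ r, ENNReal.ofReal (1 - Real.exp (-r)) ∂ρ < ⊤)
    (hF_supp : F (Set.Iio 0) = 0)
    (hF : ∫⁻ v, ENNReal.ofReal (v ^ 2) ∂F < ⊤) :
    ∫⁻ r, ∫⁻ v₁, ∫⁻ v₂, ENNReal.ofReal (1 - Real.exp (-(r * v₁ * v₂))) ∂F ∂F ∂ρ < ⊤ := by
  set M : ENNReal := ∫⁻ v, ENNReal.ofReal v ∂F with hM
  have hFae : ∀ᵐ v ∂F, 0 ≤ v := by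
    rw [ae_iff]
    have h : {v : ℝ | ¬ 0 ≤ v} = Set.Iio 0 := by ext v; simp
    rw [h]; exact hF_supp
  have hρae : ∀ᵐ r ∂ρ, 0 ≤ r := by
    rw [ae_iff]
    exact measure_mono_null (fun x hx => le_of_lt (not_le.mp hx)) hρ_supp
  have hMlt : M < ⊤ := by
    have : M ≤ ∫⁻ v, (1 + ENNReal.ofReal (v ^ 2)) ∂F := by
      refine lintegral_mono fun v => ?_
      calc ENNReal.ofReal v ≤ ENNReal.ofReal (1 + v ^ 2) :=
            ENNReal.ofReal_le_ofReal (by nlinarith [sq_nonneg (v - 1)])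
        _ = 1 + ENNReal.ofReal (v ^ 2) := by
            rw [ENNReal.ofReal_add (by norm_num) (sq_nonneg v)]; simp
    refine lt_of_le_of_lt this ?_
    rw [lintegral_add_left measurable_const]
    simp only [lintegral_const, measure_univ, mul_one]
    exact ENNReal.add_lt_top.mpr ⟨by simp, hF⟩
  -- key pointwise bound in ENNReal
  have key : ∀ r v₁ v₂ : ℝ, 0 ≤ r → 0 ≤ v₁ → 0 ≤ v₂ →
      ENNReal.ofReal (1 - Real.exp (-(r * v₁ * v₂))) ≤
        (1 + ENNReal.ofReal v₁ * ENNReal.ofReal v₂) * ENNReal.ofReal (1 - Real.exp (-r)) := by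
    intro r v₁ v₂ hr h1 h2
    have := real_key hr (mul_nonneg h1 h2) (r := r) (a := v₁ * v₂)
    calc ENNReal.ofReal (1 - Real.exp (-(r * v₁ * v₂)))
        ≤ ENNReal.ofReal ((1 + v₁ * v₂) * (1 - Real.exp (-r))) := by
          apply ENNReal.ofReal_le_ofReal
          rw [mul_assoc]; exact this
      _ = (1 + ENNReal.ofReal v₁ * ENNReal.ofReal v₂) * ENNReal.ofReal (1 - Real.exp (-r)) := by
          rw [ENNReal.ofReal_mul (by positivity), ENNReal.ofReal_add (by norm_num) (by positivity),
            ENNReal.ofReal_mul h1]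
          simp
  have inner : ∀ r : ℝ, 0 ≤ r →
      ∫⁻ v₁, ∫⁻ v₂, ENNReal.ofReal (1 - Real.exp (-(r * v₁ * v₂))) ∂F ∂F ≤
        (1 + M * M) * ENNReal.ofReal (1 - Real.exp (-r)) := by
    intro r hr
    set c := ENNReal.ofReal (1 - Real.exp (-r)) with hc
    have hcne : c ≠ ⊤ := ENNReal.ofReal_ne_top
    have step2 : ∀ v₁ : ℝ, 0 ≤ v₁ →
        ∫⁻ v₂, ENNReal.ofReal (1 - Real.exp (-(r * v₁ * v₂))) ∂F ≤
          (1 + ENNReal.ofReal v₁ * M) * c := by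
      intro v₁ h1
      have : ∫⁻ v₂, ENNReal.ofReal (1 - Real.exp (-(r * v₁ * v₂))) ∂F ≤
          ∫⁻ v₂, (1 + ENNReal.ofReal v₁ * ENNReal.ofReal v₂) * c ∂F := by
        refine lintegral_mono_ae (hFae.mono fun v₂ h2 => ?_)
        exact key r v₁ v₂ hr h1 h2
      refine this.trans (le_of_eq ?_)
      have : ∀ v₂ : ℝ, (1 + ENNReal.ofReal v₁ * ENNReal.ofReal v₂) * c =
          c + (c * ENNReal.ofReal v₁) * ENNReal.ofReal v₂ := by
        intro v₂; ring
      simp_rw [this]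
      rw [lintegral_add_left measurable_const,
        lintegral_const_mul' _ _ (by finiteness), lintegral_const]
      simp only [measure_univ, mul_one]
      ring
    have : ∫⁻ v₁, ∫⁻ v₂, ENNReal.ofReal (1 - Real.exp (-(r * v₁ * v₂))) ∂F ∂F ≤
        ∫⁻ v₁, (1 + ENNReal.ofReal v₁ * M) * c ∂F := by
      refine lintegral_mono_ae (hFae.mono fun v₁ h1 => step2 v₁ h1)
    refine this.trans (le_of_eq ?_)
    have hMne : M ≠ ⊤ := hMlt.ne
    have heq : ∀ v₁ : ℝ, (1 + ENNReal.ofReal v₁ * M) * c =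
        c + (c * M) * ENNReal.ofReal v₁ := by intro v₁; ring
    simp_rw [heq]
    rw [lintegral_add_left measurable_const,
      lintegral_const_mul' _ _ (by finiteness), lintegral_const]
    simp only [measure_univ, mul_one, ← hM]
    ring
  have : ∫⁻ r, ∫⁻ v₁, ∫⁻ v₂, ENNReal.ofReal (1 - Real.exp (-(r * v₁ * v₂))) ∂F ∂F ∂ρ ≤
      ∫⁻ r, (1 + M * M) * ENNReal.ofReal (1 - Real.exp (-r)) ∂ρ := by
    exact lintegral_mono_ae (hρae.mono fun r hr => inner r hr)
  refine lt_of_le_of_lt this ?_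
  rw [lintegral_const_mul' _ _ (by finiteness)]
  exact ENNReal.mul_lt_top (by finiteness) hρ
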